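/- Let u : ℝ≥0 → ℝ be three times differentiable, strictly increasing, strictly concave, with nondecreasing absolute risk aversion (r'(c) ≥ 0 where r(c) = −u''(c)/u'(c)). Then the inverse function ψ = u⁻¹ satisfies ψ'''(x) > 0 for all x in the range of u. -/

import Mathlib

/-- Corollary of Lemma 7: a strictly increasing, strictly concave utility with
nondecreasing absolute risk aversion has an inverse `ψ` with `ψ''' > 0` on the
range of `u`. -/
theorem psi_third_derivative_pos_of_IARA
    (u ψ : ℝ → ℝ)
    (hu : ContDiff ℝ 3 u)
    (hu' : ∀ c, 0 < deriv u c)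
    (hu'' : ∀ c, iteratedDeriv 2 u c < 0)
    (hψ : ∀ c, ψ (u c) = c)
    (r : ℝ → ℝ)
    (hr : ∀ c, r c = -(iteratedDeriv 2 u c) / deriv u c)
    (hIARA : ∀ c, 0 ≤ deriv r c)
    (c : ℝ) :
    0 < iteratedDeriv 3 ψ (u c) := by
  -- smoothness of derivatives
  have hcd2 : ContDiff ℝ 2 (deriv u) :=
    ((contDiff_succ_iff_deriv (n := 2)).1 (by exact_mod_cast hu)).2.2
  have hcd1 : ContDiff ℝ 1 (deriv (deriv u)) :=
    ((contDiff_succ_iff_deriv (n := 1)).1 (by exact_mod_cast hcd2)).2.2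
  have hu'd : Differentiable ℝ (deriv u) := hcd2.differentiable (by norm_num)
  have hu''d : Differentiable ℝ (deriv (deriv u)) := hcd1.differentiable (by norm_num)
  have h2u : iteratedDeriv 2 u = deriv (deriv u) := by
    rw [show (2:ℕ) = 1 + 1 from rfl, iteratedDeriv_succ, iteratedDeriv_one]
  -- strict derivative and local inverse facts
  have hstrict : ∀ a : ℝ, HasStrictDerivAt u (deriv u a) a := fun a =>
    hu.contDiffAt.hasStrictDerivAt (by norm_num)
  have hψd : ∀ a : ℝ, HasStrictDerivAt ψ (deriv u a)⁻¹ (u a) := fun a =>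
    (hstrict a).to_local_left_inverse (ne_of_gt (hu' a)) (Filter.Eventually.of_forall hψ)
  have hmem : ∀ a : ℝ, Set.range u ∈ nhds (u a) := by
    intro a
    rw [← (hstrict a).map_nhds_eq (ne_of_gt (hu' a))]
    exact Filter.mem_map.2 (by simp [Set.preimage, Set.mem_range_self])
  have key3 : ∀ x ∈ Set.range u, HasDerivAt ψ (deriv u (ψ x))⁻¹ x := by
    rintro x ⟨a, rfl⟩
    rw [hψ]
    exact (hψd a).hasDerivAt
  -- first derivative of ψ as a function on range u
  have ev1 : ∀ a : ℝ, deriv ψ =ᶠ[nhds (u a)] fun x => (deriv u (ψ x))⁻¹ := fun a =>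
    Filter.eventually_of_mem (hmem a) fun x hx => (key3 x hx).deriv
  -- derivative of A := deriv u ∘ ψ on range u
  have hA : ∀ x ∈ Set.range u,
      HasDerivAt (fun y => deriv u (ψ y)) (deriv (deriv u) (ψ x) * (deriv u (ψ x))⁻¹) x :=
    fun x hx => (hu'd (ψ x)).hasDerivAt.comp x (key3 x hx)
  have hinv : ∀ x ∈ Set.range u,
      HasDerivAt (fun y => (deriv u (ψ y))⁻¹)
        (-(deriv (deriv u) (ψ x) * (deriv u (ψ x))⁻¹) / (deriv u (ψ x)) ^ 2) x :=
    fun x hx => (hA x hx).inv (ne_of_gt (hu' (ψ x)))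
  have d2 : ∀ x ∈ Set.range u, iteratedDeriv 2 ψ x =
      -(deriv (deriv u) (ψ x) * (deriv u (ψ x))⁻¹) / (deriv u (ψ x)) ^ 2 := by
    rintro x hx
    obtain ⟨a, rfl⟩ := hx
    rw [show (2:ℕ) = 1 + 1 from rfl, iteratedDeriv_succ, iteratedDeriv_one,
      (ev1 a).deriv_eq, (hinv _ ⟨a, rfl⟩).deriv]
  have ev2 : iteratedDeriv 2 ψ =ᶠ[nhds (u c)]
      fun x => -(deriv (deriv u) (ψ x) * (deriv u (ψ x))⁻¹) / (deriv u (ψ x)) ^ 2 :=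
    Filter.eventually_of_mem (hmem c) fun x hx => d2 x hx
  -- abbreviations at the point c
  set a := deriv u c with ha_def
  set b := deriv (deriv u) c with hb_def
  set d := deriv (deriv (deriv u)) c with hd_def
  have ha : 0 < a := hu' c
  have hb : b < 0 := by rw [hb_def, ← h2u]; exact hu'' c
  have hane : a ≠ 0 := ne_of_gt ha
  -- derivative of B := deriv (deriv u) ∘ ψ at u c
  have hψc : ψ (u c) = c := hψ c
  have hBc : HasDerivAt (fun y => deriv (deriv u) (ψ y)) (d * a⁻¹) (u c) := by
    have := (hu''d (ψ (u c))).hasDerivAt.comp (u c) (key3 (u c) ⟨c, rfl⟩)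
    rwa [hψc] at this
  have hAc : HasDerivAt (fun y => deriv u (ψ y)) (b * a⁻¹) (u c) := by
    have := hA (u c) ⟨c, rfl⟩; rwa [hψc] at this
  have hinvc : HasDerivAt (fun y => (deriv u (ψ y))⁻¹) (-(b * a⁻¹) / a ^ 2) (u c) := by
    have := hinv (u c) ⟨c, rfl⟩; rwa [hψc] at this
  -- derivative of φ₂ at u c
  have hnum : HasDerivAt (fun y => -(deriv (deriv u) (ψ y) * (deriv u (ψ y))⁻¹))
      (-(d * a⁻¹ * (deriv u (ψ (u c)))⁻¹ + deriv (deriv u) (ψ (u c)) * (-(b * a⁻¹) / a ^ 2)))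
      (u c) := (hBc.mul hinvc).neg
  have hden : HasDerivAt (fun y => (deriv u (ψ y)) ^ 2)
      (2 * (deriv u (ψ (u c))) ^ 1 * (b * a⁻¹)) (u c) := hAc.pow 2
  have hdenne : (deriv u (ψ (u c))) ^ 2 ≠ 0 := by
    rw [hψc]; positivity
  have hphi2 := hnum.div hden hdenne
  -- value of the third derivative
  have h3 : iteratedDeriv 3 ψ (u c) = (3 * b ^ 2 - a * d) / a ^ 5 := by
    rw [show (3:ℕ) = 2 + 1 from rfl, iteratedDeriv_succ, ev2.deriv_eq,
      HasDerivAt.deriv (f := fun x => -(deriv (deriv u) (ψ x) * (deriv u (ψ x))⁻¹) / deriv u (ψ x) ^ 2) hphi2]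
    rw [hψc, ← ha_def, ← hb_def]
    field_simp
    ring
  rw [h3]
  -- IARA gives b^2 - a*d ≥ 0
  have hrfun : r = fun x => -(deriv (deriv u) x) / deriv u x := by
    funext x; rw [hr x, h2u]
  have hrd : HasDerivAt r ((-d * a - -b * b) / a ^ 2) c := by
    rw [hrfun]
    exact ((hu''d c).hasDerivAt.neg).div (hu'd c).hasDerivAt hane
  have hIc : 0 ≤ (-d * a - -b * b) / a ^ 2 := by
    rw [← hrd.deriv]; exact hIARA c
  have hnumge : 0 ≤ b * b - d * a := by
    have h := mul_nonneg hIc (le_of_lt (pow_pos ha 2))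
    rw [div_mul_cancel₀ _ (by positivity : a ^ 2 ≠ 0)] at h
    linarith
  have : 0 < 3 * b ^ 2 - a * d := by nlinarith [sq_nonneg b, mul_pos_of_neg_of_neg hb hb]
  positivity
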